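/- Let a = α + iβ ∈ ℂ with α > 0, β > 0 and |a| < 1, and let ā = α − iβ be its complex conjugate. If |a − 1/2| ≥ 1/2 then s_{B²}(a, ā) = |a|. If |a − 1/2| ≤ 1/2 then s_{B²}(a, ā) = β/√((1−α)² + β²), and in this case β/√((1−α)² + β²) ≤ |a| = √(α² + β²). -/

import Mathlib

open Metric Set Real

/-- The triangular ratio metric of `G`. -/
noncomputable def sMet {E : Type*} [MetricSpace E] (G : Set E) (x y : E) : ℝ :=
  sSup ((fun z => dist x y / (dist x z + dist z y)) '' frontier G)

/-- The Cassinian metric of `G`. -/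
noncomputable def cMet {E : Type*} [MetricSpace E] (G : Set E) (x y : E) : ℝ :=
  sSup ((fun z => dist x y / (dist x z * dist z y)) '' frontier G)

/-- The distance ratio metric of `G`. -/
noncomputable def jMet {E : Type*} [MetricSpace E] (G : Set E) (x y : E) : ℝ :=
  Real.log (1 + dist x y / min (infDist x (frontier G)) (infDist y (frontier G)))

set_option maxHeartbeats 1000000

lemma norm_sq_complex (w : ℂ) : ‖w‖ ^ 2 = w.re ^ 2 + w.im ^ 2 := by
  rw [Complex.sq_norm, Complex.normSq_apply]; ring

lemma le_of_sq_le_sq' {t X : ℝ} (hX : 0 ≤ X) (h : t^2 ≤ X^2) (ht : 0 ≤ t) : t ≤ X := by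
  calc t = Real.sqrt (t^2) := (Real.sqrt_sq ht).symm
  _ ≤ Real.sqrt (X^2) := Real.sqrt_le_sqrt h
  _ = X := Real.sqrt_sq hX

lemma eq_of_sq_eq_sq' {t X : ℝ} (hX : 0 ≤ X) (h : t^2 = X^2) (ht : 0 ≤ t) : t = X := by
  calc t = Real.sqrt (t^2) := (Real.sqrt_sq ht).symm
  _ = Real.sqrt (X^2) := by rw [h]
  _ = X := Real.sqrt_sq hX

lemma sMet_eq_of (a : ℂ) (him : 0 < a.im) (V : ℝ) (hV : 0 < V)
    (hmem : ∃ z : ℂ, ‖z‖ = 1 ∧ dist a z + dist z ((starRingEnd ℂ) a) = 2 * a.im / V)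
    (hub : ∀ z : ℂ, ‖z‖ = 1 → 2 * a.im / V ≤ dist a z + dist z ((starRingEnd ℂ) a)) :
    sMet (Metric.ball (0 : ℂ) 1) a ((starRingEnd ℂ) a) = V := by
  have hfront : frontier (Metric.ball (0 : ℂ) 1) = Metric.sphere 0 1 :=
    frontier_ball 0 one_ne_zero
  have hdaa : dist a ((starRingEnd ℂ) a) = 2 * a.im := by
    rw [dist_eq_norm, Complex.sub_conj]
    simp [map_mul, Complex.norm_real, Complex.norm_I,
      abs_of_pos him]
  unfold sMet
  rw [hfront]
  apply IsGreatest.csSup_eq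
  constructor
  · obtain ⟨z, hz, hsum⟩ := hmem
    refine ⟨z, ?_, ?_⟩
    · simp [Metric.mem_sphere, dist_zero_right, hz]
    · simp only
      rw [hdaa, hsum]
      field_simp
  · rintro v ⟨z, hz, rfl⟩
    have hz1 : ‖z‖ = 1 := by simpa [dist_zero_right] using hz
    have h := hub z hz1
    simp only
    rw [hdaa]
    have hpos : 0 < 2 * a.im / V := by positivity
    rw [div_le_iff₀ (lt_of_lt_of_le hpos h)]
    calc 2 * a.im = (2 * a.im / V) * V := by field_simp
    _ ≤ (dist a z + dist z ((starRingEnd ℂ) a)) * V :=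
      mul_le_mul_of_nonneg_right h hV.le
    _ = V * (dist a z + dist z ((starRingEnd ℂ) a)) := mul_comm _ _

lemma sum_bound1 (α β x y p q : ℝ) (hβ : 0 < β)
    (hxy : x^2+y^2 = 1) (hp : 0 ≤ p) (hq : 0 ≤ q)
    (hp2 : p^2 = 1 + (α^2+β^2) - 2*(α*x+β*y))
    (hq2 : q^2 = 1 + (α^2+β^2) - 2*(α*x-β*y)) :
    2*β/Real.sqrt (α^2+β^2) ≤ p + q := by
  have hRpos : (0:ℝ) < α^2+β^2 := by positivity
  have hr2 : (Real.sqrt (α^2+β^2))^2 = α^2+β^2 := Real.sq_sqrt hRpos.le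
  have hrpos : 0 < Real.sqrt (α^2+β^2) := Real.sqrt_pos.mpr hRpos
  have hpq2 : (p*q)^2 = (1+(α^2+β^2)-2*α*x)^2 - 4*β^2*y^2 := by
    rw [mul_pow, hp2, hq2]; ring
  have hkey : ((α^2+β^2)*(p*q))^2
      = (2*β^2 - (α^2+β^2)*(1+(α^2+β^2)-2*α*x))^2 + 4*β^2*((α^2+β^2)*x-α)^2 := by
    linear_combination (α^2+β^2)^2 * hpq2 - 4*β^2*(α^2+β^2)^2 * hxy
  have hpq : 2*β^2 - (α^2+β^2)*(1+(α^2+β^2)-2*α*x) ≤ (α^2+β^2)*(p*q) := by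
    rcases le_or_gt (2*β^2 - (α^2+β^2)*(1+(α^2+β^2)-2*α*x)) 0 with h|h
    · exact h.trans (by positivity)
    · refine le_of_sq_le_sq' (by positivity) ?_ h.le
      nlinarith [sq_nonneg ((α^2+β^2)*x-α), sq_nonneg β]
  rw [div_le_iff₀ hrpos]
  have hsum2 : (2*β)^2 ≤ ((p+q)*Real.sqrt (α^2+β^2))^2 := by
    have h1 : ((p+q)*Real.sqrt (α^2+β^2))^2 = (p^2+q^2+2*(p*q))*(α^2+β^2) := by
      rw [mul_pow, hr2]; ring
    rw [h1, hp2, hq2]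
    nlinarith [hpq]
  exact le_of_sq_le_sq' (mul_nonneg (add_nonneg hp hq) hrpos.le) hsum2 (by positivity)

lemma sum_bound2 (α β x y p q : ℝ) (hα : 0 < α) (hβ : 0 < β) (hcond : α^2+β^2 ≤ α)
    (hxy : x^2+y^2 = 1) (hp : 0 ≤ p) (hq : 0 ≤ q)
    (hp2 : p^2 = 1 + (α^2+β^2) - 2*(α*x+β*y))
    (hq2 : q^2 = 1 + (α^2+β^2) - 2*(α*x-β*y)) :
    2*Real.sqrt ((1-α)^2+β^2) ≤ p + q := by
  have hDpos : (0:ℝ) < (1-α)^2+β^2 := by positivity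
  have hs2 : (Real.sqrt ((1-α)^2+β^2))^2 = (1-α)^2+β^2 := Real.sq_sqrt hDpos.le
  have hspos : 0 < Real.sqrt ((1-α)^2+β^2) := Real.sqrt_pos.mpr hDpos
  have hpq2 : (p*q)^2 = (1+(α^2+β^2)-2*α*x)^2 - 4*β^2*y^2 := by
    rw [mul_pow, hp2, hq2]; ring
  have hx1 : x ≤ 1 := by nlinarith [sq_nonneg y]
  have hα1 : α < 1 := by nlinarith
  have hA : (0:ℝ) ≤ 8*(1-x)*(1-α)*(α-(α^2+β^2)) := by
    have := mul_nonneg (mul_nonneg (by linarith : (0:ℝ) ≤ 1-x) (by linarith : (0:ℝ) ≤ 1-α))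
      (by linarith : (0:ℝ) ≤ α-(α^2+β^2))
    linarith
  have hkey : (p*q)^2 = (2*(1+(α^2+β^2)-2*α) - (1+(α^2+β^2)-2*α*x))^2
      + 8*(1-x)*(1-α)*(α-(α^2+β^2)) + 4*β^2*(1-x)^2 := by
    linear_combination hpq2 - 4*β^2*hxy
  have hpq : 2*(1+(α^2+β^2)-2*α) - (1+(α^2+β^2)-2*α*x) ≤ p*q := by
    rcases le_or_gt (2*(1+(α^2+β^2)-2*α) - (1+(α^2+β^2)-2*α*x)) 0 with h|h
    · exact h.trans (mul_nonneg hp hq)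
    · refine le_of_sq_le_sq' (mul_nonneg hp hq) ?_ h.le
      have hB : (0:ℝ) ≤ 4*β^2*(1-x)^2 := by positivity
      linarith [hkey]
  have hsum2 : (2*Real.sqrt ((1-α)^2+β^2))^2 ≤ (p+q)^2 := by
    have h1 : (p+q)^2 = p^2+q^2+2*(p*q) := by ring
    rw [h1, hp2, hq2, mul_pow, hs2]
    nlinarith [hpq]
  exact le_of_sq_le_sq' (add_nonneg hp hq) hsum2 (by positivity)

lemma sum_eq1 (α β x y p q : ℝ) (hα : 0 < α) (hβ : 0 < β)
    (hR1 : α^2+β^2 < 1) (hcond : α ≤ α^2+β^2)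
    (hx : x = α/(α^2+β^2)) (hy : y = Real.sqrt ((α^2+β^2)^2-α^2)/(α^2+β^2))
    (hp : 0 ≤ p) (hq : 0 ≤ q)
    (hp2 : p^2 = 1 + (α^2+β^2) - 2*(α*x+β*y))
    (hq2 : q^2 = 1 + (α^2+β^2) - 2*(α*x-β*y)) :
    p + q = 2*β/Real.sqrt (α^2+β^2) := by
  have hRpos : (0:ℝ) < α^2+β^2 := by positivity
  have hr2 : (Real.sqrt (α^2+β^2))^2 = α^2+β^2 := Real.sq_sqrt hRpos.le
  have hrpos : 0 < Real.sqrt (α^2+β^2) := Real.sqrt_pos.mpr hRpos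
  have hsq : α^2 ≤ (α^2+β^2)^2 := by nlinarith
  have hy2 : y^2 = ((α^2+β^2)^2-α^2)/(α^2+β^2)^2 := by
    rw [hy, div_pow, Real.sq_sqrt (by linarith)]
  have hxy : x^2+y^2 = 1 := by
    rw [hx, hy2, div_pow]
    field_simp
    ring
  have hpq2 : (p*q)^2 = (1+(α^2+β^2)-2*α*x)^2 - 4*β^2*y^2 := by
    rw [mul_pow, hp2, hq2]; ring
  have hkey : ((α^2+β^2)*(p*q))^2
      = (2*β^2 - (α^2+β^2)*(1+(α^2+β^2)-2*α*x))^2 + 4*β^2*((α^2+β^2)*x-α)^2 := by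
    linear_combination (α^2+β^2)^2 * hpq2 - 4*β^2*(α^2+β^2)^2 * hxy
  have hx0 : (α^2+β^2)*x-α = 0 := by rw [hx]; field_simp; ring
  have hval : 2*β^2 - (α^2+β^2)*(1+(α^2+β^2)-2*α*x) = (α^2+β^2)*(1-(α^2+β^2)) := by
    rw [hx]; field_simp; ring
  have hRpq : (α^2+β^2)*(p*q) = (α^2+β^2)*(1-(α^2+β^2)) := by
    refine eq_of_sq_eq_sq' (by nlinarith) ?_
      (mul_nonneg hRpos.le (mul_nonneg hp hq))
    rw [hkey, hx0, hval]; ring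
  have hpqv : p*q = 1-(α^2+β^2) := mul_left_cancel₀ hRpos.ne' hRpq
  have h1 : (p+q)^2 = 4*β^2/(α^2+β^2) := by
    rw [show (p+q)^2 = p^2+q^2+2*(p*q) by ring, hp2, hq2, hpqv, hx]
    field_simp
    ring
  have h2 : (2*β/Real.sqrt (α^2+β^2))^2 = 4*β^2/(α^2+β^2) := by
    rw [div_pow, hr2]; ring
  exact eq_of_sq_eq_sq' (by positivity) (h1.trans h2.symm) (add_nonneg hp hq)

/-- for `a = α + iβ` with `α, β > 0` and `|a| < 1`:
if `|a − 1/2| ≥ 1/2` then `s_{B²}(a, ā) = |a|`; if `|a − 1/2| ≤ 1/2` then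
`s_{B²}(a, ā) = β/√((1−α)² + β²)` and this value is at most `|a| = √(α² + β²)`. -/
theorem sMet_conj (a : ℂ) (hre : 0 < a.re) (him : 0 < a.im) (ha : ‖a‖ < 1) :
    (1 / 2 ≤ ‖a - 1 / 2‖ →
      sMet (Metric.ball (0 : ℂ) 1) a ((starRingEnd ℂ) a) = ‖a‖) ∧
    (‖a - 1 / 2‖ ≤ 1 / 2 →
      sMet (Metric.ball (0 : ℂ) 1) a ((starRingEnd ℂ) a) =
          a.im / Real.sqrt ((1 - a.re) ^ 2 + a.im ^ 2) ∧
        a.im / Real.sqrt ((1 - a.re) ^ 2 + a.im ^ 2) ≤ Real.sqrt (a.re ^ 2 + a.im ^ 2) ∧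
        ‖a‖ = Real.sqrt (a.re ^ 2 + a.im ^ 2)) := by
  have hnormsq : ‖a‖^2 = a.re^2 + a.im^2 := norm_sq_complex a
  have hR1 : a.re^2 + a.im^2 < 1 := by nlinarith [norm_nonneg a]
  have hRpos : (0:ℝ) < a.re^2 + a.im^2 := by positivity
  have hna : ‖a‖ = Real.sqrt (a.re^2 + a.im^2) := by
    rw [← hnormsq, Real.sqrt_sq (norm_nonneg a)]
  have hcsq : ‖a - 1/2‖^2 = (a.re - 1/2)^2 + a.im^2 := by
    rw [norm_sq_complex]
    norm_num [Complex.sub_re, Complex.sub_im, Complex.div_re, Complex.div_im,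
      Complex.normSq_apply]
  have hdists : ∀ z : ℂ, ‖z‖ = 1 →
      (dist a z)^2 = 1 + (a.re^2+a.im^2) - 2*(a.re*z.re + a.im*z.im) ∧
      (dist z ((starRingEnd ℂ) a))^2 = 1 + (a.re^2+a.im^2) - 2*(a.re*z.re - a.im*z.im) := by
    intro z hz
    have hz2 : z.re^2 + z.im^2 = 1 := by rw [← norm_sq_complex, hz]; norm_num
    constructor
    · rw [dist_eq_norm, norm_sq_complex]
      simp only [Complex.sub_re, Complex.sub_im]
      linear_combination hz2
    · rw [dist_eq_norm, norm_sq_complex]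
      simp only [Complex.sub_re, Complex.sub_im, Complex.conj_re, Complex.conj_im]
      linear_combination hz2
  constructor
  · -- case 1
    intro h
    have hcond : a.re ≤ a.re^2 + a.im^2 := by
      have h2 : (1/2:ℝ)^2 ≤ ‖a - 1/2‖^2 := by
        apply pow_le_pow_left₀ (by norm_num) h
      rw [hcsq] at h2; nlinarith
    have hVpos : (0:ℝ) < ‖a‖ := by rw [hna]; positivity
    apply sMet_eq_of a him ‖a‖ hVpos
    · -- attainment
      set R := a.re^2 + a.im^2 with hRdef
      set x₀ : ℝ := a.re / R with hx₀
      set y₀ : ℝ := Real.sqrt (R^2 - a.re^2) / R with hy₀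
      have hsq : a.re^2 ≤ R^2 := by nlinarith
      have hy₀2 : y₀^2 = (R^2 - a.re^2)/R^2 := by
        rw [hy₀, div_pow, Real.sq_sqrt (by linarith)]
      have hxy : x₀^2 + y₀^2 = 1 := by
        rw [hx₀, hy₀2, div_pow]; field_simp; ring
      have hz₀re : ((x₀:ℂ) + (y₀:ℂ)*Complex.I).re = x₀ := by simp
      have hz₀im : ((x₀:ℂ) + (y₀:ℂ)*Complex.I).im = y₀ := by simp
      have hz₀n : ‖(x₀:ℂ) + (y₀:ℂ)*Complex.I‖ = 1 := by
        refine eq_of_sq_eq_sq' zero_le_one ?_ (norm_nonneg _)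
        rw [norm_sq_complex, hz₀re, hz₀im, hxy]; norm_num
      refine ⟨(x₀:ℂ) + (y₀:ℂ)*Complex.I, hz₀n, ?_⟩
      obtain ⟨hp2, hq2⟩ := hdists _ hz₀n
      rw [hz₀re, hz₀im] at hp2 hq2
      rw [hna]
      exact sum_eq1 a.re a.im x₀ y₀ _ _ hre him hR1 hcond hx₀ hy₀
        dist_nonneg dist_nonneg hp2 hq2
    · intro z hz
      obtain ⟨hp2, hq2⟩ := hdists z hz
      rw [hna]
      have := sum_bound1 a.re a.im z.re z.im (dist a z) (dist z ((starRingEnd ℂ) a))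
        him (by rw [← norm_sq_complex, hz]; norm_num) dist_nonneg dist_nonneg hp2 hq2
      linarith [this]
  · -- case 2
    intro h
    have hcond : a.re^2 + a.im^2 ≤ a.re := by
      have h2 : ‖a - 1/2‖^2 ≤ (1/2:ℝ)^2 := by
        apply pow_le_pow_left₀ (norm_nonneg _) h
      rw [hcsq] at h2; nlinarith
    have hDpos : (0:ℝ) < (1 - a.re)^2 + a.im^2 := by positivity
    have hsD : 0 < Real.sqrt ((1 - a.re)^2 + a.im^2) := Real.sqrt_pos.mpr hDpos
    have hVpos : (0:ℝ) < a.im / Real.sqrt ((1 - a.re)^2 + a.im^2) := by positivity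
    have hVsum : 2 * a.im / (a.im / Real.sqrt ((1 - a.re)^2 + a.im^2))
        = 2 * Real.sqrt ((1 - a.re)^2 + a.im^2) := by
      field_simp
    refine ⟨?_, ?_, hna⟩
    · apply sMet_eq_of a him _ hVpos
      · -- attainment at z = 1
        refine ⟨1, by norm_num, ?_⟩
        obtain ⟨hp2, hq2⟩ := hdists 1 (by norm_num)
        simp only [Complex.one_re, Complex.one_im] at hp2 hq2
        have hpd : dist a 1 = Real.sqrt ((1 - a.re)^2 + a.im^2) := by
          apply eq_of_sq_eq_sq' (Real.sqrt_nonneg _) ?_ dist_nonneg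
          rw [Real.sq_sqrt hDpos.le, hp2]; ring
        have hqd : dist (1:ℂ) ((starRingEnd ℂ) a) = Real.sqrt ((1 - a.re)^2 + a.im^2) := by
          apply eq_of_sq_eq_sq' (Real.sqrt_nonneg _) ?_ dist_nonneg
          rw [Real.sq_sqrt hDpos.le, hq2]; ring
        rw [hpd, hqd, hVsum]; ring
      · intro z hz
        obtain ⟨hp2, hq2⟩ := hdists z hz
        rw [hVsum]
        exact sum_bound2 a.re a.im z.re z.im _ _ hre him hcond
          (by rw [← norm_sq_complex, hz]; norm_num) dist_nonneg dist_nonneg hp2 hq2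
    · -- the inequality
      rw [div_le_iff₀ hsD]
      have hβ2 : a.im^2 ≤ (a.re^2+a.im^2) * ((1-a.re)^2+a.im^2) := by
        nlinarith [sq_nonneg (a.re - (a.re^2+a.im^2))]
      calc a.im = Real.sqrt (a.im^2) := (Real.sqrt_sq him.le).symm
      _ ≤ Real.sqrt ((a.re^2+a.im^2) * ((1-a.re)^2+a.im^2)) := Real.sqrt_le_sqrt hβ2
      _ = Real.sqrt (a.re^2+a.im^2) * Real.sqrt ((1-a.re)^2+a.im^2) :=
        Real.sqrt_mul hRpos.le _
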